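/- Let X be a topological space, f : X → X a homeomorphism, and q a fixed point of f with an open neighborhood b such that cl(b) ⊆ f(b) and ⋂_{k≥0} f^{-k}(b) = {q}. Then ⋃_{k∈ℤ} f^k( f(b) ∖ b ) = ( ⋃_{k≥0} f^k(b) ) ∖ {q}. -/

import Mathlib

open Filter Topology Set

/-- Tiling property (Lemma 2): if `q` is a repelling fixed point of a
homeomorphism `f` with trapping ball `b`, then the integer iterates of the
fundamental annulus `f(b) ∖ b` cover exactly the punctured basin
`(⋃_{k≥0} f^k(b)) ∖ {q}`. -/
theorem iterates_of_fundamental_annulus_tile_punctured_basin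
    {X : Type*} [TopologicalSpace X] (f : X ≃ₜ X)
    (q : X) (hfix : f q = q)
    (b : Set X) (hbopen : IsOpen b) (hqb : q ∈ b)
    (hexp : closure b ⊆ ⇑f '' b)
    (hbasin : (⋂ k : ℕ, (⇑f)^[k] ⁻¹' b) = {q}) :
    (⋃ k : ℤ, ⇑(f.toEquiv ^ k : Equiv.Perm X) '' ((⇑f '' b) \ b)) =
      (⋃ k : ℕ, (⇑f)^[k] '' b) \ {q} := by
  classical
  set e : Equiv.Perm X := f.toEquiv with he
  have hb_sub : b ⊆ ⇑f '' b := subset_closure.trans hexp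
  set c : ℤ → Set X := fun k => ⇑(e ^ k) '' b with hc
  have hce : ⇑e = ⇑f := rfl
  have hpow : ∀ (n : ℕ) (x : X), (e ^ n) x = (⇑f)^[n] x := by
    intro n
    induction n with
    | zero => intro x; simp
    | succ n ih =>
        intro x
        rw [pow_succ, Equiv.Perm.mul_apply, Function.iterate_succ_apply]
        exact ih (e x)
  have hq : ∀ k : ℤ, (e ^ k) q = q := by
    have hq1 : e q = q := hfix
    have hqinv : e⁻¹ q = q := by
      rw [Equiv.Perm.inv_def, Equiv.symm_apply_eq]; exact hq1.symm
    intro k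
    induction k using Int.induction_on with
    | zero => simp
    | succ n ih =>
        rw [zpow_add_one, Equiv.Perm.mul_apply, hq1, ih]
    | pred n ih =>
        rw [zpow_sub_one, Equiv.Perm.mul_apply, hqinv, ih]
  have hsucc : ∀ k : ℤ, c (k + 1) = ⇑(e ^ k) '' (⇑f '' b) := by
    intro k
    show ⇑(e ^ (k + 1)) '' b = _
    rw [zpow_add_one, Equiv.Perm.coe_mul, Set.image_comp, hce]
  have hmono : Monotone c := by
    apply monotone_int_of_le_succ
    intro k
    rw [hsucc k]
    exact Set.image_mono hb_sub
  have hqc : ∀ k : ℤ, q ∈ c k := fun k => ⟨q, hqb, hq k⟩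
  have hnat : ∀ n : ℕ, c (n : ℤ) = (⇑f)^[n] '' b := by
    intro n
    show ⇑(e ^ (n : ℤ)) '' b = _
    rw [zpow_natCast]
    exact Set.image_congr' (hpow n)
  have hmem : ∀ (k : ℤ) (x : X), x ∈ c k ↔ (e ^ (-k)) x ∈ b := by
    intro k x
    have hsymm : ⇑(e ^ k).symm = ⇑(e ^ (-k)) := by
      rw [zpow_neg, ← Equiv.Perm.inv_def]
    show x ∈ ⇑(e ^ k) '' b ↔ _
    rw [Equiv.image_eq_preimage_symm, Set.mem_preimage, hsymm]
  have hA : ∀ k : ℤ, ⇑(e ^ k) '' ((⇑f '' b) \ b) = c (k + 1) \ c k := by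
    intro k
    rw [Set.image_diff (Equiv.injective _), hsucc k]
  ext x
  simp only [Set.mem_iUnion, Set.mem_diff, Set.mem_singleton_iff]
  constructor
  · rintro ⟨k, hx⟩
    rw [hA k] at hx
    obtain ⟨h1, h2⟩ := hx
    refine ⟨?_, fun hxq => h2 (hxq ▸ hqc k)⟩
    by_cases hk : 0 ≤ k + 1
    · exact ⟨(k + 1).toNat, by
        rw [← hnat, Int.toNat_of_nonneg hk]; exact h1⟩
    · refine ⟨0, ?_⟩
      rw [← hnat]
      exact hmono (le_of_lt (by omega : k + 1 < (0 : ℤ))) h1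
  · rintro ⟨⟨n, hxn⟩, hxq⟩
    have hxc : x ∈ c (n : ℤ) := by rw [hnat]; exact hxn
    have hnotall : ∃ m : ℤ, x ∉ c m := by
      by_contra h
      push_neg at h
      apply hxq
      have hx2 : x ∈ ⋂ k : ℕ, (⇑f)^[k] ⁻¹' b := by
        refine Set.mem_iInter.2 fun k => ?_
        have hk := (hmem _ x).1 (h (-(k : ℤ)))
        rw [neg_neg] at hk
        rw [zpow_natCast, hpow] at hk
        exact hk
      rw [hbasin] at hx2
      exact hx2
    obtain ⟨m, hm⟩ := hnotall
    have hmn : m ≤ (n : ℤ) := by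
      by_contra h
      exact hm (hmono (le_of_lt (not_le.mp h)) hxc)
    have hP : ∃ j : ℕ, x ∈ c (m + j) := by
      refine ⟨((n : ℤ) - m).toNat, ?_⟩
      rw [Int.toNat_of_nonneg (sub_nonneg.2 hmn)]
      simpa using hxc
    have hj : x ∈ c (m + (Nat.find hP : ℤ)) := Nat.find_spec hP
    have hj0 : Nat.find hP ≠ 0 := by
      intro h0
      apply hm
      rw [h0] at hj
      simpa using hj
    obtain ⟨i, hi⟩ := Nat.exists_eq_succ_of_ne_zero hj0
    have hni : x ∉ c (m + (i : ℤ)) := Nat.find_min hP (by omega)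
    refine ⟨m + (i : ℤ), ?_⟩
    rw [hA]
    constructor
    · have heq : m + (i : ℤ) + 1 = m + (Nat.find hP : ℤ) := by
        rw [hi]; push_cast; ring
      rw [heq]; exact hj
    · exact hni
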